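/- Let S, V : [0,∞) → [0,∞) be C¹ and φ : [0,∞) → (0,∞) nonincreasing, with S'(t) ≤ V(t) and V'(t) ≤ -φ(S(t))V(t). Define the Lyapunov functional E(t) = V(t) + ψ(S(t)) where ψ(s) = ∫₀ˢ φ(r) dr. Then E is nonincreasing in t: E(t) ≤ E(0) for all t ≥ 0. -/

import Mathlib

open Set Filter Topology

private lemma uIcc_sub_Ici {a b : ℝ} (ha : 0 ≤ a) (hb : 0 ≤ b) : uIcc a b ⊆ Ici 0 :=
  fun x hx => le_trans (le_inf ha hb) hx.1

private lemma phi_int {φ : ℝ → ℝ} (hφanti : AntitoneOn φ (Ici 0)) {a b : ℝ}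
    (ha : 0 ≤ a) (hb : 0 ≤ b) : IntervalIntegrable φ MeasureTheory.volume a b :=
  (hφanti.mono (uIcc_sub_Ici ha hb)).intervalIntegrable

/-- Key concavity estimate: `∫_a^b φ ≤ φ a * (b - a)` for antitone `φ`. -/
private lemma integral_le_key {φ : ℝ → ℝ} (hφanti : AntitoneOn φ (Ici 0)) {a b : ℝ}
    (ha : 0 ≤ a) (hb : 0 ≤ b) : (∫ r in a..b, φ r) ≤ φ a * (b - a) := by
  rcases le_total a b with hab | hab
  · have h1 : (∫ r in a..b, φ r) ≤ ∫ _ in a..b, φ a := by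
      apply intervalIntegral.integral_mono_on hab (phi_int hφanti ha hb)
        intervalIntegrable_const
      intro x hx
      exact hφanti ha (le_trans ha hx.1) hx.1
    simpa [mul_comm] using h1
  · rw [intervalIntegral.integral_symm]
    have h1 : (∫ _ in b..a, φ a) ≤ ∫ r in b..a, φ r := by
      apply intervalIntegral.integral_mono_on hab intervalIntegrable_const
        (phi_int hφanti hb ha)
      intro x hx
      exact hφanti (le_trans hb hx.1) ha hx.2
    have : φ a * (a - b) ≤ ∫ r in b..a, φ r := by simpa [mul_comm] using h1
    nlinarith [this]

/-- The Lyapunov functional `E = V + ψ(S)` is nonincreasing along solutions of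
the differential inequalities `S' ≤ V`, `V' ≤ -φ(S) V`. -/
theorem stmt_2 (S V φ : ℝ → ℝ)
    (hS : ContDiffOn ℝ 1 S (Ici 0)) (hV : ContDiffOn ℝ 1 V (Ici 0))
    (hSpos : ∀ t ∈ Ici (0:ℝ), 0 ≤ S t) (hVpos : ∀ t ∈ Ici (0:ℝ), 0 ≤ V t)
    (hφpos : ∀ r ∈ Ici (0:ℝ), 0 < φ r) (hφanti : AntitoneOn φ (Ici 0))
    (hS' : ∀ t ∈ Ici (0:ℝ), derivWithin S (Ici 0) t ≤ V t)
    (hV' : ∀ t ∈ Ici (0:ℝ), derivWithin V (Ici 0) t ≤ -φ (S t) * V t)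
    (ψ : ℝ → ℝ) (hψ : ∀ s, ψ s = ∫ r in (0:ℝ)..s, φ r) :
    ∀ t ∈ Ici (0:ℝ), V t + ψ (S t) ≤ V 0 + ψ (S 0) := by
  -- difference formula for ψ
  have hψsub : ∀ a b : ℝ, 0 ≤ a → 0 ≤ b → ψ b - ψ a = ∫ r in a..b, φ r := by
    intro a b ha hb
    rw [hψ, hψ]
    exact intervalIntegral.integral_interval_sub_left (phi_int hφanti le_rfl hb)
      (phi_int hφanti le_rfl ha)
  -- concavity-type estimate
  have hψkey : ∀ a b : ℝ, 0 ≤ a → 0 ≤ b → ψ b - ψ a ≤ φ a * (b - a) := by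
    intro a b ha hb
    rw [hψsub a b ha hb]
    exact integral_le_key hφanti ha hb
  -- ψ is Lipschitz on Ici 0, hence ψ ∘ S continuous
  have hψlip : ∀ a b : ℝ, 0 ≤ a → 0 ≤ b → |ψ b - ψ a| ≤ φ 0 * |b - a| := by
    intro a b ha hb
    rw [hψsub a b ha hb]
    have := intervalIntegral.norm_integral_le_of_norm_le_const (C := φ 0) (f := φ)
      (a := a) (b := b) ?_
    · simpa [Real.norm_eq_abs] using this
    · intro x hx
      have hx0 : (0:ℝ) ≤ x := le_of_lt (lt_of_le_of_lt (le_inf ha hb) hx.1)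
      rw [Real.norm_eq_abs, abs_of_pos (hφpos x hx0)]
      exact hφanti Set.self_mem_Ici hx0 hx0
  have hψcont : ContinuousOn ψ (Ici 0) := by
    refine (LipschitzOnWith.continuousOn (K := Real.toNNReal (φ 0)) ?_)
    intro a ha b hb
    rw [edist_dist, edist_dist, Real.dist_eq, Real.dist_eq]
    have := hψlip b a hb ha
    have h0 : 0 ≤ φ 0 := (hφpos 0 Set.self_mem_Ici).le
    calc (ENNReal.ofReal |ψ a - ψ b|) ≤ ENNReal.ofReal (φ 0 * |a - b|) :=
          ENNReal.ofReal_le_ofReal this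
      _ = ENNReal.ofReal (φ 0) * ENNReal.ofReal |a - b| := by
          rw [ENNReal.ofReal_mul h0]
      _ = (Real.toNNReal (φ 0) : ENNReal) * ENNReal.ofReal |a - b| := by
          rw [ENNReal.ofReal]
  intro t ht
  set g : ℝ → ℝ := fun u => V u + ψ (S u) with hg
  have hcont : ContinuousOn g (Icc 0 t) := by
    apply ContinuousOn.add
    · exact (hV.continuousOn).mono (Icc_subset_Ici_self)
    · exact (hψcont.comp ((hS.continuousOn).mono Icc_subset_Ici_self)
        (fun u hu => hSpos u hu.1))
  have key := image_le_of_liminf_slope_right_le_deriv_boundary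
    (f := g) (a := 0) (b := t) hcont (B := fun _ => V 0 + ψ (S 0)) (B' := fun _ => 0)
    le_rfl continuousOn_const (fun x _ => hasDerivWithinAt_const x _ _) ?_
  · exact key ⟨ht, le_rfl⟩
  · intro x hx r hr
    have hx0 : x ∈ Ici (0:ℝ) := hx.1
    set dV := derivWithin V (Ici 0) x with hdV
    set dS := derivWithin S (Ici 0) x with hdS
    have hVd : HasDerivWithinAt V dV (Ici 0) x :=
      ((hV.differentiableOn one_ne_zero) x hx0).hasDerivWithinAt
    have hSd : HasDerivWithinAt S dS (Ici 0) x :=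
      ((hS.differentiableOn one_ne_zero) x hx0).hasDerivWithinAt
    have hsub : 𝓝[>] x ≤ 𝓝[Ici (0:ℝ) \ {x}] x := by
      apply nhdsWithin_mono
      intro z hz
      exact ⟨(le_trans hx0 (le_of_lt hz) : (0:ℝ) ≤ z), ne_of_gt hz⟩
    have hVt : Filter.Tendsto (slope V x) (𝓝[>] x) (nhds dV) :=
      ((hasDerivWithinAt_iff_tendsto_slope.mp hVd).mono_left hsub)
    have hSt : Filter.Tendsto (slope S x) (𝓝[>] x) (nhds dS) :=
      ((hasDerivWithinAt_iff_tendsto_slope.mp hSd).mono_left hsub)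
    have hφS : 0 < φ (S x) := hφpos _ (hSpos x hx0)
    have hlim : dV + φ (S x) * dS < r := by
      have h1 : dV ≤ -φ (S x) * V x := hV' x hx0
      have h2 : φ (S x) * dS ≤ φ (S x) * V x :=
        mul_le_mul_of_nonneg_left (hS' x hx0) hφS.le
      have hr' : (0:ℝ) < r := hr
      nlinarith
    have htend : Filter.Tendsto (fun z => slope V x z + φ (S x) * slope S x z)
        (𝓝[>] x) (nhds (dV + φ (S x) * dS)) :=
      hVt.add (Filter.Tendsto.const_mul _ hSt)
    have hev : ∀ᶠ z in 𝓝[>] x, slope V x z + φ (S x) * slope S x z < r :=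
      htend.eventually (Filter.Tendsto.eventually_lt_const hlim Filter.tendsto_id)
    have hmem : ∀ᶠ z in 𝓝[>] x, z ∈ Ioi x := self_mem_nhdsWithin
    refine ((hev.and hmem).mono ?_).frequently
    rintro z ⟨hz1, hz2⟩
    have hzx : (0:ℝ) < z - x := sub_pos.mpr hz2
    have hz0 : (0:ℝ) ≤ z := le_trans hx0 hz2.le
    have hψle : ψ (S z) - ψ (S x) ≤ φ (S x) * (S z - S x) :=
      hψkey (S x) (S z) (hSpos x hx0) (hSpos z hz0)
    calc slope g x z = (g z - g x) / (z - x) := by rw [slope_def_field]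
      _ ≤ ((V z - V x) + φ (S x) * (S z - S x)) / (z - x) := by
          apply div_le_div_of_nonneg_right ?_ hzx.le
          · simp only [hg]; linarith
      _ = slope V x z + φ (S x) * slope S x z := by
          rw [slope_def_field, slope_def_field]
          field_simp
      _ < r := hz1
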